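/- Let (X,Y) ∈ [0,1]^d × {-1,1} be a random couple with distribution P whose regression function η and marginal Π satisfy the low noise assumption with parameters B, γ > 0. Then there exists a constant D2 > 0 depending only on B and γ such that for every bounded measurable f : [0,1]^d → ℝ, R_P(f) − R* ≤ D2 · ‖(f − η)·1{sign f ≠ sign η}‖_{L²(Π)}^{2(1+γ)/(2+γ)}. -/

import Mathlib

open MeasureTheory ProbabilityTheory Set

noncomputable section

namespace ActivePlugIn

variable {d : ℕ}

/-- The unit cube `[0,1]^d`. -/
def cube (d : ℕ) : Set (Fin d → ℝ) := Set.Icc 0 1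

/-- Sign function (with the convention `sgn 0 = -1`). -/
def sgn (t : ℝ) : ℝ := if 0 < t then 1 else -1

/-- Binary classification risk `R_P(f) = P(Y ≠ sign f(X))`. -/
def risk (P : Measure ((Fin d → ℝ) × ℝ)) (f : (Fin d → ℝ) → ℝ) : ℝ :=
  (P {p | p.2 ≠ sgn (f p.1)}).toReal

/-- Bayes risk: infimum of the risk over all measurable `g : [0,1]^d → [-1,1]`. -/
def bayesRisk (P : Measure ((Fin d → ℝ) × ℝ)) : ℝ :=
  ⨅ g : {g : (Fin d → ℝ) → ℝ // Measurable g ∧ ∀ x, g x ∈ Set.Icc (-1 : ℝ) 1},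
    risk P g.1

/-- `η` is (a version of) the regression function `E(Y | X = x)` of `P`. -/
def IsRegressionOf (η : (Fin d → ℝ) → ℝ) (P : Measure ((Fin d → ℝ) × ℝ)) : Prop :=
  ∀ s : Set (Fin d → ℝ), MeasurableSet s →
    ∫ p in Prod.fst ⁻¹' s, p.2 ∂P = ∫ x in s, η x ∂(P.map Prod.fst)

/-- `P` is a distribution of a random couple `(X,Y) ∈ [0,1]^d × {-1,1}` with
regression function `η`. -/
def GoodPair (d : ℕ) (P : Measure ((Fin d → ℝ) × ℝ)) (η : (Fin d → ℝ) → ℝ) : Prop :=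
  IsProbabilityMeasure P ∧ Measurable η ∧ (∀ x, η x ∈ Set.Icc (-1 : ℝ) 1) ∧
    (∀ᵐ p ∂P, p.1 ∈ cube d ∧ (p.2 = 1 ∨ p.2 = -1)) ∧ IsRegressionOf η P

/-- Tsybakov's low noise assumption with constants `B, γ`. -/
def LowNoise (B γ : ℝ) (μ : Measure (Fin d → ℝ)) (η : (Fin d → ℝ) → ℝ) : Prop :=
  ∀ t : ℝ, 0 < t → μ {x | |η x| ≤ t} ≤ ENNReal.ofReal (B * t ^ γ)

/-- Index of the level-`m` dyadic cube containing `x`. -/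
def cubeIdx (m : ℕ) (x : Fin d → ℝ) : Fin d → ℕ := fun i => ⌊x i * 2 ^ m⌋₊

/-- The (half-open) level-`m` dyadic cube with index `k`. -/
def dyadicCube (d m : ℕ) (k : Fin d → ℕ) : Set (Fin d → ℝ) :=
  {x | ∀ i, (k i : ℝ) / 2 ^ m ≤ x i ∧ x i < ((k i : ℝ) + 1) / 2 ^ m}

/-- Support of a measure: points all of whose open neighbourhoods have positive mass. -/
def suppSet (μ : Measure (Fin d → ℝ)) : Set (Fin d → ℝ) :=
  {x | ∀ U : Set (Fin d → ℝ), IsOpen U → x ∈ U → μ U ≠ 0}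

/-- `A` belongs to the sigma-algebra generated by level-`m` dyadic cubes,
i.e. it is a union of level-`m` dyadic cubes. -/
def IsDyadicUnion (d m : ℕ) (A : Set (Fin d → ℝ)) : Prop :=
  ∃ S : Set (Fin d → ℕ), A = ⋃ k ∈ S, dyadicCube d m k

/-- `(u1,u2)`-regularity of a measure with respect to the dyadic partitions. -/
def Regular (d : ℕ) (u1 u2 : ℝ) (μ : Measure (Fin d → ℝ)) : Prop :=
  ∀ m : ℕ, 1 ≤ m → ∀ k : Fin d → ℕ, (∀ i, k i < 2 ^ m) →
    (dyadicCube d m k ∩ suppSet μ).Nonempty →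
    ENNReal.ofReal (u1 / 2 ^ (d * m)) ≤ μ (dyadicCube d m k) ∧
      μ (dyadicCube d m k) ≤ ENNReal.ofReal (u2 / 2 ^ (d * m))

/-- The `L²(μ)`-projection `η̄_m` of `η` onto piecewise-constant functions over the
level-`m` dyadic partition: on each cube it is the `μ`-average of `η` over that cube. -/
def etaBar (μ : Measure (Fin d → ℝ)) (η : (Fin d → ℝ) → ℝ) (m : ℕ) (x : Fin d → ℝ) : ℝ :=
  ⨍ y in dyadicCube d m (cubeIdx m x), η y ∂μ

/-- `A` approximates the decision boundary at level `t`. -/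
def ApproxBoundary (μ : Measure (Fin d → ℝ)) (η : (Fin d → ℝ) → ℝ) (t : ℝ)
    (A : Set (Fin d → ℝ)) : Prop :=
  {x | |η x| ≤ t} ∩ suppSet μ ⊆ A ∩ suppSet μ ∧
    A ∩ suppSet μ ⊆ {x | |η x| ≤ 3 * t} ∩ suppSet μ

/-- Assumption 2 of the paper, with constant `B2`. -/
def Assumption2 (d : ℕ) (B2 : ℝ) (μ : Measure (Fin d → ℝ)) (η : (Fin d → ℝ) → ℝ) : Prop :=
  ∀ m : ℕ, 1 ≤ m → ∀ A : Set (Fin d → ℝ), IsDyadicUnion d m A →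
    (∃ t : ℝ, 0 < t ∧ ApproxBoundary μ η t A) → (A ∩ suppSet μ).Nonempty →
    B2 * (⨆ x ∈ A ∩ suppSet μ, |η x - etaBar μ η m x|) ^ 2 ≤
      ∫ x, (η x - etaBar μ η m x) ^ 2 ∂(μ[|A ∩ suppSet μ])

/-- The law of the label `Y ∈ {-1,1}` given `X = x`: `P(Y = 1|X = x) = (1 + η(x))/2`. -/
def labelKernel (d : ℕ) (η : (Fin d → ℝ) → ℝ) (x : Fin d → ℝ) : Measure ℝ :=
  ENNReal.ofReal ((1 + η x) / 2) • Measure.dirac 1 +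
    ENNReal.ofReal ((1 - η x) / 2) • Measure.dirac (-1)

/-- The joint law of `(X,Y)` when `X ∼ μ` and `P(Y = 1|X = x) = (1 + η(x))/2`. -/
def jointMeasure (d : ℕ) (μ : Measure (Fin d → ℝ)) (η : (Fin d → ℝ) → ℝ) :
    Measure ((Fin d → ℝ) × ℝ) :=
  μ.bind fun x => (labelKernel d η x).map fun y => (x, y)

/-- The law of the trajectory `(X_1,Y_1,…,X_N,Y_N)` of an active learning procedure:
`X_k` is sampled from the kernel `samp` applied to the past observations and `Y_k` is
sampled from the conditional label distribution determined by `η`. -/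
def traj (d : ℕ) (η : (Fin d → ℝ) → ℝ)
    (samp : (k : ℕ) → (Fin k → ((Fin d → ℝ) × ℝ)) → Measure (Fin d → ℝ)) :
    (N : ℕ) → Measure (Fin N → ((Fin d → ℝ) × ℝ))
  | 0 => Measure.dirac fun i => i.elim0
  | (N + 1) =>
      (traj d η samp N).bind fun h =>
        (samp N h).bind fun x => (labelKernel d η x).map fun y => Fin.snoc h (x, y)

/-- Kullback–Leibler divergence `KL(P,Q) = ∫ log (dP/dQ) dP`. -/
def kl {Ω : Type*} [MeasurableSpace Ω] (P Q : Measure Ω) : ℝ :=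
  ∫ ω, Real.log ((P.rnDeriv Q ω).toReal) ∂P

/-- Multivariate Taylor polynomial of degree `n` of `g` at `x`, evaluated at `x1`. -/
def taylorP (d : ℕ) (g : (Fin d → ℝ) → ℝ) (n : ℕ) (x x1 : Fin d → ℝ) : ℝ :=
  ∑ k ∈ Finset.range (n + 1),
    (1 / (Nat.factorial k : ℝ)) * iteratedFDeriv ℝ k g x (fun _ => x1 - x)

/-- The Hölder class `Σ(β,K,[0,1]^d)`. -/
def HolderSigma (d : ℕ) (β K : ℝ) (g : (Fin d → ℝ) → ℝ) : Prop :=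
  ContDiff ℝ (⌊β⌋₊ : ℕ) g ∧
    ∀ x ∈ cube d, ∀ x1 ∈ cube d, |g x1 - taylorP d g ⌊β⌋₊ x x1| ≤ K * ‖x - x1‖ ^ β

/-- The Hölder condition for exponent `0 < β ≤ 1` with constant `L`
(`‖·‖` on `Fin d → ℝ` is the sup-norm). -/
def HolderLow (d : ℕ) (β L : ℝ) (η : (Fin d → ℝ) → ℝ) : Prop :=
  ∀ x1 ∈ cube d, ∀ x2 ∈ cube d, |η x1 - η x2| ≤ L * ‖x1 - x2‖ ^ β

/-- The class `F_m` of piecewise-constant functions over the level-`m` dyadic partition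
with values bounded by `1`. -/
def Fclass (d m : ℕ) : Set ((Fin d → ℝ) → ℝ) :=
  {f | ∃ lam : (Fin d → ℕ) → ℝ, (∀ k, |lam k| ≤ 1) ∧ f = fun x => lam (cubeIdx m x)}

/-- Empirical quadratic risk `P_N (Y - f(X))²`. -/
def empRisk {d : ℕ} (N : ℕ) (ω : Fin N → ((Fin d → ℝ) × ℝ)) (f : (Fin d → ℝ) → ℝ) : ℝ :=
  (∑ j, ((ω j).2 - f (ω j).1) ^ 2) / N

/-- The set `J(N)` of admissible resolution levels. -/
def Jset (d N : ℕ) : Set ℕ :=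
  {m | 1 ≤ (2 : ℝ) ^ (d * m) ∧ (2 : ℝ) ^ (d * m) ≤ (N : ℝ) / (Real.log N) ^ 2}

/-- The penalized model-selection criterion with constant `K1`
(`s_m = m (s + log log₂ N)`). -/
def crit {d : ℕ} (K1 s : ℝ) (N : ℕ) (ω : Fin N → ((Fin d → ℝ) × ℝ)) (m : ℕ) : ℝ :=
  (⨅ f ∈ Fclass d m, empRisk N ω f) +
    K1 * ((2 : ℝ) ^ (d * m) + m * (s + Real.log (Real.logb 2 N))) / N

/-- `inf_{f ∈ F_m} E (f(X) - η(X))²`. -/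
def approxErr {d : ℕ} (μ : Measure (Fin d → ℝ)) (η : (Fin d → ℝ) → ℝ) (m : ℕ) : ℝ :=
  ⨅ f ∈ Fclass d m, ∫ x, (f x - η x) ^ 2 ∂μ

/-- `m̄ = min {m ≥ 1 : inf_{f ∈ F_m} E(f(X)-η(X))² ≤ K2 2^{dm}/N}`. -/
def mbar {d : ℕ} (K2 : ℝ) (N : ℕ) (μ : Measure (Fin d → ℝ)) (η : (Fin d → ℝ) → ℝ) : ℕ :=
  sInf {m | 1 ≤ m ∧ approxErr μ η m ≤ K2 * (2 : ℝ) ^ (d * m) / N}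

/-- Membership in the class `P*_U(β,γ)` (with Hölder smoothness stated for general `β`
via Taylor polynomials), for the pair (marginal `μ`, regression function `η`). -/
def InStarClass (d : ℕ) (β γ B K u1 u2 B2 : ℝ) (μ : Measure (Fin d → ℝ))
    (η : (Fin d → ℝ) → ℝ) : Prop :=
  IsProbabilityMeasure μ ∧ μ (cube d) = 1 ∧ Measurable η ∧
    (∀ x, η x ∈ Set.Icc (-1 : ℝ) 1) ∧ LowNoise B γ μ η ∧ HolderSigma d β K η ∧
    Regular d u1 u2 μ ∧ Assumption2 d B2 μ η

/-- Membership in the class `P*_U(β,γ)` for `0 < β ≤ 1`, with Hölder constant `B1`. -/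
def InStarClassLow (d : ℕ) (β γ B B1 u1 u2 B2 : ℝ) (μ : Measure (Fin d → ℝ))
    (η : (Fin d → ℝ) → ℝ) : Prop :=
  IsProbabilityMeasure μ ∧ μ (cube d) = 1 ∧ Measurable η ∧
    (∀ x, η x ∈ Set.Icc (-1 : ℝ) 1) ∧ LowNoise B γ μ η ∧ HolderLow d β B1 η ∧
    Regular d u1 u2 μ ∧ Assumption2 d B2 μ η

/-! ### Auxiliary lemmas for Statement 1 -/

lemma sgn_meas : Measurable sgn := by
  unfold sgn
  exact Measurable.ite (measurableSet_lt measurable_const measurable_id) measurable_const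
    measurable_const

lemma sgn_eq_or (t : ℝ) : sgn t = 1 ∨ sgn t = -1 := by
  unfold sgn; split <;> simp

lemma sgn_mul_self (a : ℝ) : sgn a * a = |a| := by
  unfold sgn; split
  · rw [abs_of_pos ‹_›]; ring
  · rw [abs_of_nonpos (le_of_not_gt ‹_›)]; ring

lemma sgn_mul_le (b a : ℝ) : sgn b * a ≤ |a| := by
  rcases sgn_eq_or b with h | h <;> rw [h]
  · simpa using le_abs_self a
  · simpa using neg_le_abs a

lemma meas_inter_of_null {Ω : Type*} [MeasurableSpace Ω] (μ : Measure Ω) {G : Set Ω}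
    (h : μ Gᶜ = 0) (B : Set Ω) : μ B = μ (B ∩ G) := by
  refine le_antisymm ?_ (measure_mono inter_subset_left)
  calc μ B ≤ μ (B ∩ G ∪ Gᶜ) :=
        measure_mono (by intro x hx; by_cases hG : x ∈ G <;> simp [hx, hG])
  _ ≤ μ (B ∩ G) + μ Gᶜ := measure_union_le _ _
  _ = μ (B ∩ G) := by rw [h, add_zero]

lemma risk_formula {d : ℕ} (P : Measure ((Fin d → ℝ) × ℝ)) (η : (Fin d → ℝ) → ℝ)
    (hP : GoodPair d P η) (g : (Fin d → ℝ) → ℝ) (hg : Measurable g) :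
    risk P g = 1 / 2 - (1 / 2) * ∫ x, sgn (g x) * η x ∂(P.map Prod.fst) := by
  obtain ⟨hprob, hη, hηbd, hae, hreg⟩ := hP
  haveI := hprob
  haveI : IsProbabilityMeasure (P.map Prod.fst) :=
    Measure.isProbabilityMeasure_map measurable_fst.aemeasurable
  set μX := P.map Prod.fst with hμX
  set s : Set (Fin d → ℝ) := {x | 0 < g x} with hs_def
  have hs : MeasurableSet s := measurableSet_lt measurable_const hg
  set A1 : Set ((Fin d → ℝ) × ℝ) := {p | p.2 = 1} with hA1_def
  set A2 : Set ((Fin d → ℝ) × ℝ) := {p | p.2 = -1} with hA2_def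
  have hA1 : MeasurableSet A1 := measurable_snd (measurableSet_singleton 1)
  have hA2 : MeasurableSet A2 := measurable_snd (measurableSet_singleton (-1))
  have hGc : P (A1 ∪ A2)ᶜ = 0 := by
    have h0 : P {p : (Fin d → ℝ) × ℝ | ¬ (p.1 ∈ cube d ∧ (p.2 = 1 ∨ p.2 = -1))} = 0 :=
      ae_iff.mp hae
    refine measure_mono_null ?_ h0
    intro p hp h2
    exact hp (by simpa [hA1_def, hA2_def] using h2.2)
  have hdisj : Disjoint A1 A2 := by
    rw [Set.disjoint_left]
    intro p h1 h2
    rw [hA1_def, mem_setOf_eq] at h1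
    rw [hA2_def, mem_setOf_eq] at h2
    norm_num [h1] at h2
  set a : Set (Fin d → ℝ) → ℝ := fun u => (P (Prod.fst ⁻¹' u ∩ A1)).toReal with ha_def
  set b : Set (Fin d → ℝ) → ℝ := fun u => (P (Prod.fst ⁻¹' u ∩ A2)).toReal with hb_def
  -- set integral of p.2 equals a u - b u
  have key1 : ∀ u : Set (Fin d → ℝ), MeasurableSet u → ∫ x in u, η x ∂μX = a u - b u := by
    intro u hu
    rw [← hreg u hu]
    have hcong : (fun p : (Fin d → ℝ) × ℝ => p.2)
        =ᵐ[P.restrict (Prod.fst ⁻¹' u)]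
        fun p => A1.indicator (fun _ => (1 : ℝ)) p + A2.indicator (fun _ => (-1 : ℝ)) p := by
      refine ae_restrict_of_ae ?_
      filter_upwards [hae] with p hp
      rcases hp.2 with h | h <;>
        simp [Set.indicator_apply, hA1_def, hA2_def, h] <;> norm_num
    rw [integral_congr_ae hcong, integral_add
        ((integrable_const (1 : ℝ)).indicator hA1) ((integrable_const (-1 : ℝ)).indicator hA2),
      integral_indicator_const (1 : ℝ) hA1, integral_indicator_const (-1 : ℝ) hA2,
      Measure.real, Measure.real, Measure.restrict_apply hA1, Measure.restrict_apply hA2]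
    simp [ha_def, hb_def, Set.inter_comm, sub_eq_add_neg]
  have key2 : ∀ u : Set (Fin d → ℝ), MeasurableSet u → (μX u).toReal = a u + b u := by
    intro u hu
    have h1 : μX u = P (Prod.fst ⁻¹' u) := Measure.map_apply measurable_fst hu
    have h2 : P (Prod.fst ⁻¹' u) = P (Prod.fst ⁻¹' u ∩ (A1 ∪ A2)) :=
      meas_inter_of_null P hGc _
    have h3 : Prod.fst ⁻¹' u ∩ (A1 ∪ A2) = (Prod.fst ⁻¹' u ∩ A1) ∪ (Prod.fst ⁻¹' u ∩ A2) :=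
      Set.inter_union_distrib_left _ _ _
    have h4 : P ((Prod.fst ⁻¹' u ∩ A1) ∪ (Prod.fst ⁻¹' u ∩ A2))
        = P (Prod.fst ⁻¹' u ∩ A1) + P (Prod.fst ⁻¹' u ∩ A2) :=
      measure_union (hdisj.mono inter_subset_right inter_subset_right)
        ((measurable_fst hu).inter hA2)
    rw [h1, h2, h3, h4, ENNReal.toReal_add (measure_ne_top _ _) (measure_ne_top _ _)]
  have hsum : a s + b s + a sᶜ + b sᶜ = 1 := by
    have := key2 s hs
    have h2 := key2 sᶜ hs.compl
    have h3 : (μX s).toReal + (μX sᶜ).toReal = 1 := by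
      rw [← ENNReal.toReal_add (measure_ne_top _ _) (measure_ne_top _ _),
        measure_add_measure_compl hs]
      simp
    linarith
  -- risk computation
  have hrisk : risk P g = a sᶜ + b s := by
    have hBad : P {p : (Fin d → ℝ) × ℝ | p.2 ≠ sgn (g p.1)}
        = P ({p : (Fin d → ℝ) × ℝ | p.2 ≠ sgn (g p.1)} ∩ (A1 ∪ A2)) :=
      meas_inter_of_null P hGc _
    have hset : {p : (Fin d → ℝ) × ℝ | p.2 ≠ sgn (g p.1)} ∩ (A1 ∪ A2)
        = (Prod.fst ⁻¹' sᶜ ∩ A1) ∪ (Prod.fst ⁻¹' s ∩ A2) := by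
      ext p
      by_cases hgp : (0 : ℝ) < g p.1 <;>
        simp only [Set.mem_inter_iff, Set.mem_union, Set.mem_setOf_eq, Set.mem_preimage,
          Set.mem_compl_iff, hA1_def, hA2_def, hs_def, sgn, hgp, if_true, if_false] <;>
        constructor
      · rintro ⟨h1, h2 | h2⟩ <;> simp_all <;> norm_num at h1 ⊢
      · rintro (⟨h1, h2⟩ | ⟨h1, h2⟩) <;> simp_all <;> norm_num
      · rintro ⟨h1, h2 | h2⟩ <;> simp_all <;> norm_num at h1 ⊢
      · rintro (⟨h1, h2⟩ | ⟨h1, h2⟩) <;> simp_all <;> norm_num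
    have hmeasP : P ((Prod.fst ⁻¹' sᶜ ∩ A1) ∪ (Prod.fst ⁻¹' s ∩ A2))
        = P (Prod.fst ⁻¹' sᶜ ∩ A1) + P (Prod.fst ⁻¹' s ∩ A2) :=
      measure_union (hdisj.mono inter_subset_right inter_subset_right)
        ((measurable_fst hs).inter hA2)
    rw [risk, hBad, hset, hmeasP,
      ENNReal.toReal_add (measure_ne_top _ _) (measure_ne_top _ _)]
  -- integral computation
  have hη_int : Integrable η μX := by
    refine (integrable_const (1 : ℝ)).mono' hη.aestronglyMeasurable (ae_of_all _ fun x => ?_)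
    rw [Real.norm_eq_abs, abs_le]
    exact ⟨(hηbd x).1, (hηbd x).2⟩
  have hint : ∫ x, sgn (g x) * η x ∂μX = (a s - b s) - (a sᶜ - b sᶜ) := by
    have hpt : ∀ x, sgn (g x) * η x = s.indicator η x - sᶜ.indicator η x := by
      intro x
      by_cases hx : x ∈ s
      · have hgx : 0 < g x := hx
        simp [Set.indicator_apply, hx, sgn, hgx]
      · have hgx : ¬ 0 < g x := hx
        simp only [Set.indicator_apply, hx, if_false, Set.mem_compl_iff, if_true, sgn, if_neg hgx]
        simp
    calc ∫ x, sgn (g x) * η x ∂μX = ∫ x, (s.indicator η x - sᶜ.indicator η x) ∂μX := by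
          exact integral_congr_ae (ae_of_all _ hpt)
    _ = ∫ x, s.indicator η x ∂μX - ∫ x, sᶜ.indicator η x ∂μX :=
          integral_sub (hη_int.indicator hs) (hη_int.indicator hs.compl)
    _ = (∫ x in s, η x ∂μX) - ∫ x in sᶜ, η x ∂μX := by
          rw [integral_indicator hs, integral_indicator hs.compl]
    _ = (a s - b s) - (a sᶜ - b sᶜ) := by rw [key1 s hs, key1 sᶜ hs.compl]
  rw [hrisk, hint]
  linarith
/-- comparison inequality, `L²(Π)` version. -/
theorem statement1 (B γ : ℝ) (hB : 0 < B) (hγ : 0 < γ) :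
    ∃ D2 : ℝ, 0 < D2 ∧
      ∀ (d : ℕ) (P : Measure ((Fin d → ℝ) × ℝ)) (η : (Fin d → ℝ) → ℝ),
        GoodPair d P η →
        LowNoise B γ (P.map Prod.fst) η →
        ∀ f : (Fin d → ℝ) → ℝ, Measurable f → (∃ M : ℝ, ∀ x, |f x| ≤ M) →
          risk P f - bayesRisk P ≤
            D2 * (Real.sqrt (∫ x, (if sgn (f x) ≠ sgn (η x) then (f x - η x) ^ 2 else 0)
                ∂(P.map Prod.fst))) ^ (2 * (1 + γ) / (2 + γ)) := by
  refine ⟨B + 1, by linarith, ?_⟩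
  intro d P η hP hLN f hf hfbd
  obtain ⟨M, hM⟩ := hfbd
  have hM0 : 0 ≤ M := le_trans (abs_nonneg _) (hM fun _ => 0)
  obtain ⟨hprob, hη, hηbd, hae, hreg⟩ := id hP
  haveI := hprob
  haveI : IsProbabilityMeasure (P.map Prod.fst) :=
    Measure.isProbabilityMeasure_map measurable_fst.aemeasurable
  set μX := P.map Prod.fst with hμX
  have hγ2 : (0 : ℝ) < 2 + γ := by linarith
  have hγ1 : (0 : ℝ) < 1 + γ := by linarith
  set I : ℝ := ∫ x, (if sgn (f x) ≠ sgn (η x) then (f x - η x) ^ 2 else 0) ∂μX with hI_def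
  set δ : ℝ := Real.sqrt I with hδ_def
  set α : ℝ := 2 * (1 + γ) / (2 + γ) with hα_def
  have hαpos : 0 < α := by rw [hα_def]; positivity
  have hD : MeasurableSet {x : Fin d → ℝ | sgn (f x) ≠ sgn (η x)} :=
    (measurableSet_eq_fun (sgn_meas.comp hf) (sgn_meas.comp hη)).compl
  have hbd_int : ∀ (h : (Fin d → ℝ) → ℝ), Measurable h → ∀ C : ℝ, (∀ x, |h x| ≤ C) →
      Integrable h μX := fun h hh C hC =>
    (integrable_const C).mono' hh.aestronglyMeasurable
      (ae_of_all _ fun x => by rw [Real.norm_eq_abs]; exact hC x)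
  have hηabs : ∀ x, |η x| ≤ 1 := fun x => abs_le.mpr ⟨(hηbd x).1, (hηbd x).2⟩
  have hsgn_abs : ∀ (h : (Fin d → ℝ) → ℝ) (x : Fin d → ℝ), |sgn (h x) * η x| ≤ 1 := by
    intro h x
    have h1 : |sgn (h x)| = 1 := by rcases sgn_eq_or (h x) with h1 | h1 <;> rw [h1] <;> norm_num
    rw [abs_mul, h1, one_mul]; exact hηabs x
  have hsgn_int : ∀ h : (Fin d → ℝ) → ℝ, Measurable h →
      Integrable (fun x => sgn (h x) * η x) μX := fun h hh =>
    hbd_int _ ((sgn_meas.comp hh).mul hη) 1 (hsgn_abs h)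
  have hI_int : Integrable (fun x => if sgn (f x) ≠ sgn (η x) then (f x - η x) ^ 2 else 0) μX := by
    refine hbd_int _ (Measurable.ite hD ((hf.sub hη).pow_const 2) measurable_const)
      ((M + 1) ^ 2) fun x => ?_
    by_cases hc : sgn (f x) ≠ sgn (η x)
    · rw [if_pos hc, abs_of_nonneg (sq_nonneg _), ← sq_abs]
      have : |f x - η x| ≤ M + 1 :=
        (abs_sub _ _).trans (by linarith [hM x, hηabs x])
      exact pow_le_pow_left₀ (abs_nonneg _) this 2
    · rw [if_neg hc, abs_zero]; positivity
  have hI_nonneg : 0 ≤ I := integral_nonneg fun x => by dsimp; split <;> positivity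
  have hδsq : δ ^ 2 = I := Real.sq_sqrt hI_nonneg
  have hδ0 : 0 ≤ δ := Real.sqrt_nonneg I
  -- Bayes risk is attained by η
  have hbayes : risk P η ≤ bayesRisk P := by
    haveI : Nonempty {g : (Fin d → ℝ) → ℝ // Measurable g ∧ ∀ x, g x ∈ Set.Icc (-1 : ℝ) 1} :=
      ⟨⟨fun _ => 0, measurable_const, fun x => by norm_num⟩⟩
    refine le_ciInf fun g => ?_
    rw [risk_formula P η hP η hη, risk_formula P η hP g.1 g.2.1]
    have hmono : ∫ x, sgn (g.1 x) * η x ∂μX ≤ ∫ x, sgn (η x) * η x ∂μX := by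
      refine integral_mono (hsgn_int _ g.2.1) (hsgn_int _ hη) fun x => ?_
      rw [sgn_mul_self]; exact sgn_mul_le _ _
    linarith
  -- excess risk formula
  have hptw : ∀ x, sgn (η x) * η x - sgn (f x) * η x
      = if sgn (f x) ≠ sgn (η x) then 2 * |η x| else 0 := by
    intro x
    by_cases h : sgn (f x) = sgn (η x)
    · simp [h]
    · rw [if_pos h]
      have hneg : sgn (f x) = -sgn (η x) := by
        rcases sgn_eq_or (f x) with h1 | h1 <;> rcases sgn_eq_or (η x) with h2 | h2 <;>
          rw [h1, h2] at h ⊢ <;> simp_all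
      rw [hneg, ← sgn_mul_self (η x)]; ring
  have hJ_int : Integrable (fun x => if sgn (f x) ≠ sgn (η x) then 2 * |η x| else 0) μX := by
    refine hbd_int _ (Measurable.ite hD (hη.abs.const_mul 2) measurable_const) 2 fun x => ?_
    by_cases hc : sgn (f x) ≠ sgn (η x)
    · rw [if_pos hc, abs_of_nonneg (by positivity)]
      linarith [hηabs x]
    · rw [if_neg hc]; norm_num
  have hexcess : risk P f - risk P η
      = (1 / 2) * ∫ x, (if sgn (f x) ≠ sgn (η x) then 2 * |η x| else 0) ∂μX := by
    rw [risk_formula P η hP f hf, risk_formula P η hP η hη]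
    have h1 : ∫ x, (if sgn (f x) ≠ sgn (η x) then 2 * |η x| else 0) ∂μX
        = ∫ x, (sgn (η x) * η x - sgn (f x) * η x) ∂μX :=
      integral_congr_ae (ae_of_all _ fun x => (hptw x).symm)
    rw [h1, integral_sub (hsgn_int _ hη) (hsgn_int _ hf)]
    ring
  -- main bound for every t > 0
  have hmain : ∀ t : ℝ, 0 < t → risk P f - bayesRisk P ≤ B * t ^ (1 + γ) + I / t := by
    intro t ht
    have hSmeas : MeasurableSet {x : Fin d → ℝ | |η x| ≤ t} :=
      measurableSet_le hη.abs measurable_const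
    have hind_int : Integrable ({x : Fin d → ℝ | |η x| ≤ t}.indicator fun _ => t) μX :=
      (integrable_const t).indicator hSmeas
    have hptb : ∀ x, (if sgn (f x) ≠ sgn (η x) then 2 * |η x| else 0)
        ≤ 2 * ({x : Fin d → ℝ | |η x| ≤ t}.indicator (fun _ => t) x)
          + (2 / t) * (if sgn (f x) ≠ sgn (η x) then (f x - η x) ^ 2 else 0) := by
      intro x
      have hind_nonneg : 0 ≤ ({x : Fin d → ℝ | |η x| ≤ t}.indicator (fun _ => t) x) :=
        Set.indicator_nonneg (fun _ _ => ht.le) x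
      by_cases hc : sgn (f x) ≠ sgn (η x)
      · rw [if_pos hc, if_pos hc]
        by_cases hle : |η x| ≤ t
        · rw [Set.indicator_of_mem (by exact hle)]
          have h2 : 0 ≤ (2 / t) * (f x - η x) ^ 2 := by positivity
          linarith
        · rw [Set.indicator_of_notMem (by exact hle)]
          push_neg at hle
          have hηf : |η x| ≤ |f x - η x| := by
            have hcase : (0 < f x ∧ ¬0 < η x) ∨ (¬0 < f x ∧ 0 < η x) := by
              by_cases h1 : 0 < f x <;> by_cases h2 : 0 < η x <;>
                simp [sgn, h1, h2] at hc ⊢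
            rcases hcase with ⟨h1, h2⟩ | ⟨h1, h2⟩
            · rw [abs_of_nonpos (le_of_not_gt h2), abs_of_pos (by linarith [le_of_not_gt h2])]
              linarith
            · rw [abs_of_pos h2, abs_of_nonpos (by linarith [le_of_not_gt h1])]
              linarith
          rw [mul_zero, zero_add, div_mul_eq_mul_div, le_div_iff₀ ht]
          nlinarith [mul_le_mul_of_nonneg_left hle.le (abs_nonneg (η x)),
            mul_self_le_mul_self (abs_nonneg (η x)) hηf, abs_mul_abs_self (f x - η x)]
      · rw [if_neg hc, if_neg hc]
        have h2 : 0 ≤ (2 / t) * (0 : ℝ) := by positivity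
        linarith
    have hint_mono : ∫ x, (if sgn (f x) ≠ sgn (η x) then 2 * |η x| else 0) ∂μX
        ≤ ∫ x, (2 * ({x : Fin d → ℝ | |η x| ≤ t}.indicator (fun _ => t) x)
          + (2 / t) * (if sgn (f x) ≠ sgn (η x) then (f x - η x) ^ 2 else 0)) ∂μX :=
      integral_mono hJ_int ((hind_int.const_mul 2).add (hI_int.const_mul (2 / t))) hptb
    have hRHS : ∫ x, (2 * ({x : Fin d → ℝ | |η x| ≤ t}.indicator (fun _ => t) x)
          + (2 / t) * (if sgn (f x) ≠ sgn (η x) then (f x - η x) ^ 2 else 0)) ∂μX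
        = 2 * ((μX {x : Fin d → ℝ | |η x| ≤ t}).toReal * t) + (2 / t) * I := by
      rw [integral_add (hind_int.const_mul 2) (hI_int.const_mul (2 / t)),
        integral_const_mul, integral_const_mul, integral_indicator_const t hSmeas,
        smul_eq_mul, ← hI_def, Measure.real]
    have hmeas_le : (μX {x : Fin d → ℝ | |η x| ≤ t}).toReal ≤ B * t ^ γ := by
      have h1 := hLN t ht
      have h2 : 0 ≤ B * t ^ γ := by positivity
      calc (μX {x : Fin d → ℝ | |η x| ≤ t}).toReal
          ≤ (ENNReal.ofReal (B * t ^ γ)).toReal :=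
            ENNReal.toReal_mono ENNReal.ofReal_ne_top h1
        _ = B * t ^ γ := ENNReal.toReal_ofReal h2
    have hpow : t ^ γ * t = t ^ (1 + γ) := by
      rw [add_comm, Real.rpow_add ht, Real.rpow_one]
    have htr : 0 ≤ (μX {x : Fin d → ℝ | |η x| ≤ t}).toReal := ENNReal.toReal_nonneg
    calc risk P f - bayesRisk P ≤ risk P f - risk P η := by linarith
      _ = (1 / 2) * ∫ x, (if sgn (f x) ≠ sgn (η x) then 2 * |η x| else 0) ∂μX := hexcess
      _ ≤ (1 / 2) * (2 * ((μX {x : Fin d → ℝ | |η x| ≤ t}).toReal * t) + (2 / t) * I) := by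
          rw [← hRHS]; linarith [hint_mono]
      _ ≤ (1 / 2) * (2 * (B * t ^ γ * t) + (2 / t) * I) := by
          have := mul_le_mul_of_nonneg_right hmeas_le ht.le
          linarith
      _ = B * t ^ (1 + γ) + I / t := by
          rw [← hpow]; field_simp
  -- conclude
  rcases eq_or_lt_of_le hδ0 with hδz | hδpos
  · -- δ = 0, hence I = 0 and the excess risk is ≤ 0
    have hI0 : I = 0 := by
      have h1 : I ≤ 0 := Real.sqrt_eq_zero'.mp hδz.symm
      linarith
    have hle0 : risk P f - bayesRisk P ≤ 0 := by
      refine le_of_forall_pos_le_add fun ε hε => ?_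
      have htpos : (0 : ℝ) < (ε / B) ^ ((1 : ℝ) / (1 + γ)) :=
        Real.rpow_pos_of_pos (by positivity) _
      have h1 := hmain _ htpos
      have h2 : ((ε / B) ^ ((1 : ℝ) / (1 + γ))) ^ (1 + γ) = ε / B := by
        rw [← Real.rpow_mul (by positivity), one_div_mul_cancel hγ1.ne', Real.rpow_one]
      rw [hI0, zero_div, add_zero, h2, mul_div_cancel₀ _ hB.ne'] at h1
      linarith
    have hz : (B + 1) * δ ^ α = 0 := by
      rw [← hδz, Real.zero_rpow hαpos.ne', mul_zero]
    linarith [hz, hle0]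
  · -- δ > 0
    set t : ℝ := δ ^ ((2 : ℝ) / (2 + γ)) with ht_def
    have ht : 0 < t := Real.rpow_pos_of_pos hδpos _
    have h1 : t ^ (1 + γ) = δ ^ α := by
      rw [ht_def, ← Real.rpow_mul hδ0, hα_def]
      congr 1
      field_simp
    have h2 : I / t = δ ^ α := by
      rw [← hδsq, ht_def]
      have h3 : δ ^ 2 = δ ^ (2 : ℝ) := by
        rw [← Real.rpow_natCast δ 2]; norm_num
      rw [h3, ← Real.rpow_sub hδpos, hα_def]
      congr 1
      field_simp
      ring
    calc risk P f - bayesRisk P ≤ B * t ^ (1 + γ) + I / t := hmain t ht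
      _ = (B + 1) * δ ^ α := by rw [h1, h2]; ring

end ActivePlugIn
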